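/- Let a, b be real numbers with a ≥ 0, b ≥ 0 and a ≠ b, and let C = t² + 1 + ε(a𝐢 + b𝐣t) ∈ 𝔻ℍ[t] (the curvilinear translation along an ellipse with semi-axis lengths a and b). Then C is a motion polynomial, but there exist no dual quaternions h₁, h₂ such that t − h₁ and t − h₂ are motion polynomials and C = (t − h₁)(t − h₂). -/

import Mathlib

set_option synthInstance.maxHeartbeats 1000000
set_option maxHeartbeats 1000000


noncomputable section
open Polynomial

/-- The real quaternions ℍ. -/
abbrev Quat := Quaternion ℝ

/-- The dual quaternions 𝔻ℍ = ℍ ⊕ εℍ, realized as dual numbers over ℍ.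
An element is a pair `(p, q)` representing `p + εq`. -/
abbrev DQ := DualNumber Quat

/-- Conjugation of a dual quaternion `p + εq ↦ p̄ + εq̄`,
conjugating each quaternion part. -/
def dconj (h : DQ) : DQ := (star h.fst, star h.snd)

/-- The canonical ring homomorphism ℝ → 𝔻ℍ. -/
def realToDQ : ℝ →+* DQ := (TrivSqZeroExt.inlHom Quat Quat).comp (algebraMap ℝ Quat)

/-- Coefficientwise conjugate of a polynomial over 𝔻ℍ. -/
def pconj (C : DQ[X]) : DQ[X] := C.sum fun n a => Polynomial.C (dconj a) * X ^ n

/-- `C ∈ 𝔻ℍ[t]` is a motion polynomial if `C C̄ ∈ ℝ[t] \ {0}` and the leading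
coefficient of `C` is invertible. -/
def IsMotionPoly (C : DQ[X]) : Prop :=
  (∃ R : ℝ[X], R ≠ 0 ∧ C * pconj C = R.map realToDQ) ∧ IsUnit C.leadingCoeff

/-- The action of a dual quaternion `p + εq` (with `p ≠ 0` and satisfying the Study
condition) on a pure quaternion `x`:  `x ↦ (p x p̄ + p q̄ − q p̄)/N(p)`. -/
def act (p q x : Quat) : Quat :=
  (p * x * star p + p * star q - q * star p) * (p * star p)⁻¹

/-- The dual quaternion `p + εq` from its primal part `p` and dual part `q`. -/
def dq (p q : Quat) : DQ := (p, q)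

/-- The imaginary unit 𝐢 of ℍ. -/
def qi : Quat := ⟨0, 1, 0, 0⟩
/-- The imaginary unit 𝐣 of ℍ. -/
def qj : Quat := ⟨0, 0, 1, 0⟩
/-- The imaginary unit 𝐤 of ℍ. -/
def qk : Quat := ⟨0, 0, 0, 1⟩

@[simp] lemma qi_re : qi.re = 0 := rfl
@[simp] lemma qi_imI : qi.imI = 1 := rfl
@[simp] lemma qi_imJ : qi.imJ = 0 := rfl
@[simp] lemma qi_imK : qi.imK = 0 := rfl
@[simp] lemma qj_re : qj.re = 0 := rfl
@[simp] lemma qj_imI : qj.imI = 0 := rfl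
@[simp] lemma qj_imJ : qj.imJ = 1 := rfl
@[simp] lemma qj_imK : qj.imK = 0 := rfl

-- auxiliary lemmas

lemma fst_dconj (h : DQ) : (dconj h).fst = star h.fst := rfl
lemma snd_dconj (h : DQ) : (dconj h).snd = star h.snd := rfl

lemma dconj_zero : dconj 0 = 0 := by
  apply TrivSqZeroExt.ext <;> simp [fst_dconj, snd_dconj]

lemma dconj_add (x y : DQ) : dconj (x + y) = dconj x + dconj y := by
  apply TrivSqZeroExt.ext <;> simp [fst_dconj, snd_dconj]

lemma dconj_one : dconj 1 = 1 := by
  apply TrivSqZeroExt.ext <;> simp [fst_dconj, snd_dconj]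

lemma dconj_neg (x : DQ) : dconj (-x) = -dconj x := by
  apply TrivSqZeroExt.ext <;> simp [fst_dconj, snd_dconj]

lemma pconj_monomial (n : ℕ) (u : DQ) :
    pconj (monomial n u) = Polynomial.C (dconj u) * X ^ n := by
  unfold pconj
  rw [Polynomial.sum_monomial_index]
  simp [dconj_zero]

lemma pconj_add (P Q : DQ[X]) : pconj (P + Q) = pconj P + pconj Q := by
  unfold pconj
  rw [Polynomial.sum_add_index]
  · intro i; simp [dconj_zero]
  · intro i u v; rw [dconj_add, Polynomial.C_add, add_mul]

lemma lin_mul (u v : DQ) :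
    (X - Polynomial.C u) * (X - Polynomial.C v)
      = X ^ 2 - Polynomial.C (u + v) * X + Polynomial.C (u * v) := by
  rw [sub_mul, mul_sub, mul_sub, Polynomial.X_mul (p := Polynomial.C v), ← Polynomial.C_mul,
    ← sq, Polynomial.C_add, add_mul]
  abel

lemma dq_mul_dq_zero (u v : Quat) : dq 0 u * dq 0 v = 0 := by
  show TrivSqZeroExt.inr u * TrivSqZeroExt.inr v = 0
  exact TrivSqZeroExt.inr_mul_inr Quat u v

lemma star_qi : star qi = -qi := by
  ext <;> simp

lemma star_qj : star qj = -qj := by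
  ext <;> simp

lemma dconj_dq0 (u : Quat) : dconj (dq 0 u) = dq 0 (star u) := by
  apply TrivSqZeroExt.ext
  · show star (0 : Quat) = 0; simp
  · rfl

-- pconj of a linear polynomial
lemma pconj_linear (h : DQ) : pconj (X - Polynomial.C h) = X - Polynomial.C (dconj h) := by
  have e : (X : DQ[X]) - Polynomial.C h = monomial 1 1 + monomial 0 (-h) := by
    simp [Polynomial.monomial_zero_left, ← Polynomial.C_mul_X_eq_monomial, sub_eq_add_neg]
  rw [e, pconj_add, pconj_monomial, pconj_monomial, dconj_one, dconj_neg,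
    Polynomial.C_neg, pow_one, pow_zero, mul_one, Polynomial.C_1, one_mul,
    sub_eq_add_neg]

example : True := trivial

lemma dq0_neg (u : Quat) : dq 0 (-u) = -dq 0 u := by
  apply TrivSqZeroExt.ext <;> simp only [TrivSqZeroExt.fst_neg, TrivSqZeroExt.snd_neg] <;> simp [dq]

lemma star_smul_qi (r : ℝ) : star (r • qi) = -(r • qi) := by
  ext <;> simp

lemma star_smul_qj (r : ℝ) : star (r • qj) = -(r • qj) := by
  ext <;> simp

lemma monomial_neg' (n : ℕ) (u : DQ) : monomial n (-u) = -monomial n u :=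
  map_neg (Polynomial.monomial n : DQ →ₗ[DQ] DQ[X]) u

lemma key_lemma (A B : DQ[X]) (hcomm : A * B = B * A) (hBB : B * B = 0) :
    (A + B) * (A + -B) = A * A := by
  rw [← sub_eq_add_neg, mul_sub, add_mul, add_mul, ← hcomm, hBB]
  abel

lemma part1 (a b : ℝ) :
    IsMotionPoly
      (X ^ 2 + 1 + Polynomial.C (dq 0 (a • qi)) + Polynomial.C (dq 0 (b • qj)) * X) := by
  set e₁ : DQ := dq 0 (a • qi) with he₁
  set e₂ : DQ := dq 0 (b • qj) with he₂
  have hP : X ^ 2 + 1 + Polynomial.C e₁ + Polynomial.C e₂ * X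
      = (X ^ 2 + 1) + (monomial 0 e₁ + monomial 1 e₂) := by
    rw [Polynomial.monomial_zero_left, ← Polynomial.C_mul_X_eq_monomial, add_assoc]
  have hde₁ : dconj e₁ = -e₁ := by
    rw [he₁, dconj_dq0, star_smul_qi, dq0_neg]
  have hde₂ : dconj e₂ = -e₂ := by
    rw [he₂, dconj_dq0, star_smul_qj, dq0_neg]
  have hA : (X ^ 2 + 1 : DQ[X]) = monomial 2 1 + monomial 0 1 := by
    rw [Polynomial.monomial_zero_left, ← Polynomial.C_mul_X_pow_eq_monomial,
      Polynomial.C_1, one_mul]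
  have hpconjA : pconj (X ^ 2 + 1) = X ^ 2 + 1 := by
    conv_lhs => rw [hA]
    rw [pconj_add, pconj_monomial, pconj_monomial, dconj_one, Polynomial.C_1,
      one_mul, one_mul, pow_zero]
  have hpconjB : pconj (monomial 0 e₁ + monomial 1 e₂)
      = -(monomial 0 e₁ + monomial 1 e₂) := by
    rw [pconj_add, pconj_monomial, pconj_monomial, hde₁, hde₂, pow_zero, pow_one,
      mul_one, Polynomial.C_mul_X_eq_monomial,
      ← Polynomial.monomial_zero_left (R := DQ) (a := -e₁),
      monomial_neg', monomial_neg', neg_add]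
  set B : DQ[X] := monomial 0 e₁ + monomial 1 e₂ with hB
  have hBB : B * B = 0 := by
    rw [hB]
    simp only [add_mul, mul_add, Polynomial.monomial_mul_monomial]
    rw [he₁, he₂]
    simp [dq_mul_dq_zero]
  have hcomm : (X ^ 2 + 1) * B = B * (X ^ 2 + 1) :=
    (((Polynomial.commute_X B).pow_left 2).add_left (Commute.one_left B)).eq
  constructor
  · refine ⟨((X : ℝ[X]) ^ 2 + 1) ^ 2, ?_, ?_⟩
    · intro h
      have h0 : ((((X : ℝ[X]) ^ 2 + 1) ^ 2)).eval 0 = 1 := by simp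
      rw [h] at h0
      simp at h0
    · rw [hP, pconj_add, hpconjA, hpconjB]
      rw [key_lemma _ _ hcomm hBB]
      rw [Polynomial.map_pow, Polynomial.map_add, Polynomial.map_pow, Polynomial.map_X,
        Polynomial.map_one, ← sq]
  · have hM : (X ^ 2 + 1 + Polynomial.C e₁ + Polynomial.C e₂ * X).Monic := by
      have h1 : X ^ 2 + 1 + Polynomial.C e₁ + Polynomial.C e₂ * X
          = X ^ 2 + (1 + Polynomial.C e₁ + Polynomial.C e₂ * X) := by
        rw [add_assoc, add_assoc, add_assoc]
      rw [h1]
      apply Polynomial.monic_X_pow_add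
      have hd : (1 + Polynomial.C e₁ + Polynomial.C e₂ * X : DQ[X]).degree ≤ 1 := by
        refine le_trans (Polynomial.degree_add_le _ _) ?_
        simp only [sup_le_iff]
        constructor
        · refine le_trans (Polynomial.degree_add_le _ _) ?_
          simp only [sup_le_iff]
          exact ⟨le_trans Polynomial.degree_one_le (by norm_num),
            le_trans (Polynomial.degree_C_le) (by norm_num)⟩
        · refine le_trans (Polynomial.degree_mul_le _ _) ?_
          refine le_trans (add_le_add Polynomial.degree_C_le Polynomial.degree_X_le) ?_
          norm_num
      exact lt_of_le_of_lt hd (by norm_num)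
    rw [hM.leadingCoeff]
    exact isUnit_one

lemma snd_realToDQ (r : ℝ) : (realToDQ r).snd = 0 := rfl
lemma fst_realToDQ (r : ℝ) : (realToDQ r).fst = algebraMap ℝ Quat r := rfl

lemma motion_linear {h : DQ} (M : IsMotionPoly (X - Polynomial.C h)) :
    star h.snd = -h.snd ∧ h.fst * star h.snd + h.snd * star h.fst = 0 := by
  obtain ⟨⟨R, hR0, hR⟩, -⟩ := M
  rw [pconj_linear, lin_mul] at hR
  have h1 := congrArg (fun P => Polynomial.coeff P 1) hR
  have h0 := congrArg (fun P => Polynomial.coeff P 0) hR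
  simp only [Polynomial.coeff_add, Polynomial.coeff_sub, Polynomial.coeff_X_pow,
    Polynomial.coeff_C_mul, Polynomial.coeff_C, Polynomial.coeff_X_one,
    Polynomial.coeff_X_zero, Polynomial.coeff_map, mul_one, mul_zero] at h1 h0
  norm_num at h1 h0
  -- h1 : -(h + dconj h) = realToDQ (R.coeff 1)
  -- h0 : h * dconj h = realToDQ (R.coeff 0)
  constructor
  · have := congrArg TrivSqZeroExt.snd h1
    simp only [TrivSqZeroExt.snd_neg, TrivSqZeroExt.snd_add, snd_realToDQ, snd_dconj,
      neg_eq_zero] at this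
    rw [← neg_add, neg_eq_zero] at this
    exact eq_neg_of_add_eq_zero_left this
  · have := congrArg TrivSqZeroExt.snd h0
    simp only [TrivSqZeroExt.snd_mul, snd_realToDQ, snd_dconj, fst_dconj,
      smul_eq_mul, MulOpposite.smul_eq_mul_unop, MulOpposite.unop_op] at this
    exact this

lemma eq_neg_flip {α : Type*} [SubtractionMonoid α] {x y : α} (h : x = -y) : y = -x := by
  rw [h, neg_neg]

lemma fst_dq (p q : Quat) : (dq p q).fst = p := rfl
lemma snd_dq (p q : Quat) : (dq p q).snd = q := rfl

lemma re_sq_neg_one {p : Quat} (h : p * p = -1) : p.re = 0 := by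
  have hRe := congrArg QuaternionAlgebra.re h
  have hI := congrArg QuaternionAlgebra.imI h
  have hJ := congrArg QuaternionAlgebra.imJ h
  have hK := congrArg QuaternionAlgebra.imK h
  simp [Quaternion.re_one, Quaternion.imI_one, Quaternion.imJ_one, Quaternion.imK_one] at hRe hI hJ hK
  have key : p.re * (p.re ^ 2 + 1) = 0 := by
    linear_combination p.re * hRe + (p.imI/2) * hI + (p.imJ/2) * hJ + (p.imK/2) * hK
  rcases mul_eq_zero.mp key with h' | h'
  · exact h'
  · nlinarith [sq_nonneg p.re]

lemma part2 (a b : ℝ) (ha : 0 ≤ a) (hb : 0 ≤ b) (hab : a ≠ b) :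
    ¬ ∃ h₁ h₂ : DQ,
        IsMotionPoly (X - Polynomial.C h₁) ∧ IsMotionPoly (X - Polynomial.C h₂) ∧
        X ^ 2 + 1 + Polynomial.C (dq 0 (a • qi)) + Polynomial.C (dq 0 (b • qj)) * X
          = (X - Polynomial.C h₁) * (X - Polynomial.C h₂) := by
  rintro ⟨h₁, h₂, M1, M2, E⟩
  rw [lin_mul] at E
  have c1 := congrArg (fun P => Polynomial.coeff P 1) E
  have c0 := congrArg (fun P => Polynomial.coeff P 0) E
  simp only [Polynomial.coeff_add, Polynomial.coeff_sub, Polynomial.coeff_X_pow,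
    Polynomial.coeff_C_mul, Polynomial.coeff_C, Polynomial.coeff_X_one,
    Polynomial.coeff_X_zero, Polynomial.coeff_one, mul_one, mul_zero] at c1 c0
  norm_num at c1 c0
  obtain ⟨hq1, hs1⟩ := motion_linear M1
  obtain ⟨hq2, hs2⟩ := motion_linear M2
  have cf1 := congrArg TrivSqZeroExt.fst c1
  have cs1 := congrArg TrivSqZeroExt.snd c1
  have cf0 := congrArg TrivSqZeroExt.fst c0
  have cs0 := congrArg TrivSqZeroExt.snd c0
  simp only [TrivSqZeroExt.fst_neg, TrivSqZeroExt.fst_add, TrivSqZeroExt.fst_mul,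
    TrivSqZeroExt.fst_one, TrivSqZeroExt.snd_neg, TrivSqZeroExt.snd_add,
    TrivSqZeroExt.snd_mul, TrivSqZeroExt.snd_one, fst_dq, snd_dq, smul_eq_mul,
    MulOpposite.smul_eq_mul_unop, MulOpposite.unop_op, add_zero, zero_add] at cf1 cs1 cf0 cs0
  set f₁ := TrivSqZeroExt.fst h₁
  set s₁ := TrivSqZeroExt.snd h₁
  set f₂ := TrivSqZeroExt.fst h₂
  set s₂ := TrivSqZeroExt.snd h₂
  have hp2 : f₂ = -f₁ := by
    have h' := cf1.symm
    rw [← neg_add, neg_eq_zero] at h'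
    exact add_eq_zero_iff_eq_neg.mp h'
  have hsq : f₁ * f₁ = -1 := by
    rw [hp2, mul_neg] at cf0
    exact eq_neg_flip cf0
  have hre := re_sq_neg_one hsq
  have hstarp : star f₁ = -f₁ := by ext <;> simp [hre]
  have hanti : s₁ * f₁ = -(f₁ * s₁) := by
    rw [hq1, hstarp, mul_neg, mul_neg, ← neg_add, neg_eq_zero] at hs1
    exact eq_neg_flip (eq_neg_of_add_eq_zero_left hs1)
  have main : f₁ * -(b • qj) = a • qi := by
    rw [← eq_neg_flip (by rwa [← neg_add] at cs1 : b • qj = -(s₂ + s₁)), mul_add]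
    have hx : f₁ * s₁ = -(s₁ * f₁) := by rw [hanti, neg_neg]
    rw [hx]
    rw [hp2, mul_neg] at cs0
    exact cs0.symm
  have hnp : Quaternion.normSq f₁ = 1 := by
    have h' := congrArg Quaternion.normSq hsq
    rw [map_mul, Quaternion.normSq_neg, map_one] at h'
    have h'' : (Quaternion.normSq f₁ - 1) * (Quaternion.normSq f₁ + 1) = 0 := by
      linear_combination h'
    rcases mul_eq_zero.mp h'' with h3 | h3
    · linarith
    · have := Quaternion.normSq_nonneg (a := f₁)
      linarith
  have hfinal := congrArg Quaternion.normSq main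
  rw [map_mul, Quaternion.normSq_neg, hnp, one_mul] at hfinal
  have hb2 : Quaternion.normSq (b • qj) = b ^ 2 := by
    rw [Quaternion.normSq_def']; simp
  have ha2 : Quaternion.normSq (a • qi) = a ^ 2 := by
    rw [Quaternion.normSq_def']; simp
  rw [hb2, ha2] at hfinal
  exact hab (le_antisymm (by nlinarith) (by nlinarith))


/-- For a, b ≥ 0 with a ≠ b, the polynomial
`C = t² + 1 + ε(a𝐢 + b𝐣t)` (curvilinear translation along an ellipse with
semi-axes a and b) is a motion polynomial, but admits no factorization
`C = (t − h₁)(t − h₂)` into monic linear motion polynomials. -/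
theorem stmt16 (a b : ℝ) (ha : 0 ≤ a) (hb : 0 ≤ b) (hab : a ≠ b) :
    IsMotionPoly
      (X ^ 2 + 1 + Polynomial.C (dq 0 (a • qi)) + Polynomial.C (dq 0 (b • qj)) * X) ∧
    ¬ ∃ h₁ h₂ : DQ,
        IsMotionPoly (X - Polynomial.C h₁) ∧ IsMotionPoly (X - Polynomial.C h₂) ∧
        X ^ 2 + 1 + Polynomial.C (dq 0 (a • qi)) + Polynomial.C (dq 0 (b • qj)) * X
          = (X - Polynomial.C h₁) * (X - Polynomial.C h₂) := by
  exact ⟨part1 a b, part2 a b ha hb hab⟩
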